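/- Let d ≥ 1, let Σ be positive definite, θ₀ ∈ ℝ^d with θ₀ ≠ 0, σ > 0, and ε > 0. Define R_L(θ,ε) := ‖θ−θ₀‖²_Σ + σ² + ε²‖θ‖₂² + 2ε√(2/π)·‖θ‖₂·√(‖θ−θ₀‖²_Σ + σ²). Then every global minimizer θ* of R_L(·,ε) satisfies θ* ≠ θ₀; consequently the standard (non-adversarial) risk of θ* is strictly larger than that of θ₀: R_L(θ*,0) = ‖θ*−θ₀‖²_Σ + σ² > σ² = R_L(θ₀,0). -/

import Mathlib

open MeasureTheory ProbabilityTheory Real Filter Matrix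
open scoped RealInnerProductSpace BigOperators NNReal ENNReal Topology

noncomputable section

/-- The Σ-quadratic form `aᵀ Σ a`. -/
def quadForm {d : ℕ} (S : Matrix (Fin d) (Fin d) ℝ) (a : EuclideanSpace ℝ (Fin d)) : ℝ :=
  ∑ i, ∑ j, a i * S i j * a j

/-- The population adversarial risk of the linear model `f_θ(x) = θᵀx` under squared loss
and `L2` attacks of strength `ε`, for `x ~ N(0,Σ)` and `y = θ₀ᵀx + w`, `w ~ N(0,σ²)`:
`R_L(θ,ε) = ‖θ−θ₀‖²_Σ + σ² + ε²‖θ‖₂² + 2ε√(2/π)‖θ‖₂√(‖θ−θ₀‖²_Σ + σ²)`. -/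
def RL {d : ℕ} (S : Matrix (Fin d) (Fin d) ℝ) (θ0 : EuclideanSpace ℝ (Fin d))
    (σ ε : ℝ) (θ : EuclideanSpace ℝ (Fin d)) : ℝ :=
  quadForm S (θ - θ0) + σ ^ 2 + ε ^ 2 * ‖θ‖ ^ 2 +
    2 * ε * Real.sqrt (2 / Real.pi) * ‖θ‖ * Real.sqrt (quadForm S (θ - θ0) + σ ^ 2)

lemma quadForm_eq_dot {d : ℕ} (S : Matrix (Fin d) (Fin d) ℝ) (a : EuclideanSpace ℝ (Fin d)) :
    quadForm S a = (a : Fin d → ℝ) ⬝ᵥ (S *ᵥ a) := by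
  simp [quadForm, dotProduct, Matrix.mulVec, Finset.mul_sum, mul_assoc]

lemma quadForm_pos {d : ℕ} {S : Matrix (Fin d) (Fin d) ℝ} (hS : S.PosDef)
    {a : EuclideanSpace ℝ (Fin d)} (ha : a ≠ 0) : 0 < quadForm S a := by
  rw [quadForm_eq_dot]
  have := hS.dotProduct_mulVec_pos (x := a.ofLp) (by exact fun h => ha (by ext i; exact congrFun h i))
  simpa using this

lemma quadForm_smul {d : ℕ} (S : Matrix (Fin d) (Fin d) ℝ) (c : ℝ)
    (a : EuclideanSpace ℝ (Fin d)) : quadForm S (c • a) = c ^ 2 * quadForm S a := by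
  simp [quadForm, Finset.mul_sum]
  ring_nf

/-- For `θ₀ ≠ 0`, `σ > 0`, `ε > 0`, every global minimizer `θ*` of
`R_L(·,ε)` satisfies `θ* ≠ θ₀`, and consequently its standard (non-adversarial) risk is
strictly larger than that of `θ₀`:
`R_L(θ*,0) = ‖θ*−θ₀‖²_Σ + σ² > σ² = R_L(θ₀,0)`. -/
theorem adversarial_training_hurts_standard_risk
    {d : ℕ} (hd : 1 ≤ d) (S : Matrix (Fin d) (Fin d) ℝ) (hS : S.PosDef)
    (θ0 : EuclideanSpace ℝ (Fin d)) (hθ0 : θ0 ≠ 0) (σ ε : ℝ) (hσ : 0 < σ) (hε : 0 < ε)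
    (θs : EuclideanSpace ℝ (Fin d))
    (hmin : ∀ θ : EuclideanSpace ℝ (Fin d), RL S θ0 σ ε θs ≤ RL S θ0 σ ε θ) :
    θs ≠ θ0 ∧
    RL S θ0 σ 0 θs = quadForm S (θs - θ0) + σ ^ 2 ∧
    RL S θ0 σ 0 θ0 = σ ^ 2 ∧
    RL S θ0 σ 0 θ0 < RL S θ0 σ 0 θs := by
  set n : ℝ := ‖θ0‖ with hn
  have hnpos : 0 < n := norm_pos_iff.mpr hθ0
  set k : ℝ := Real.sqrt (2 / Real.pi) with hk
  have hkpos : 0 < k := Real.sqrt_pos.mpr (by positivity)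
  set q : ℝ := quadForm S θ0 with hq
  have hqpos : 0 < q := quadForm_pos hS hθ0
  set C : ℝ := q * σ + ε ^ 2 * n ^ 2 * σ + ε * k * n * q with hC
  have hCpos : 0 < C := by positivity
  set t : ℝ := min (1/2) ((ε ^ 2 * n ^ 2 + ε * k * n * σ) * σ / C) with ht
  have htpos : 0 < t := lt_min (by norm_num) (by positivity)
  have ht2 : t ≤ 1/2 := min_le_left _ _
  have htC : t * C ≤ (ε ^ 2 * n ^ 2 + ε * k * n * σ) * σ := by
    have h := min_le_right (1/2 : ℝ) ((ε ^ 2 * n ^ 2 + ε * k * n * σ) * σ / C)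
    rw [← ht] at h
    exact (le_div_iff₀ hCpos).mp h
  have hne : θs ≠ θ0 := by
    intro heq
    have hlt : RL S θ0 σ ε ((1 - t) • θ0) < RL S θ0 σ ε θ0 := by
      have hsub : (1 - t) • θ0 - θ0 = (-t) • θ0 := by
        rw [show θ0 = (1:ℝ) • θ0 from (one_smul ℝ θ0).symm, smul_smul, ← sub_smul]
        norm_num
      have hqf : quadForm S ((1 - t) • θ0 - θ0) = t ^ 2 * q := by
        rw [hsub, quadForm_smul]; ring_nf; rfl
      have hnorm : ‖(1 - t) • θ0‖ = (1 - t) * n := by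
        rw [norm_smul, Real.norm_eq_abs, abs_of_pos (by linarith)]
      have hqf0 : quadForm S (θ0 - θ0) = 0 := by
        simp [sub_self, quadForm]
      set s : ℝ := Real.sqrt (t ^ 2 * q + σ ^ 2) with hs
      have hs0 : 0 ≤ s := Real.sqrt_nonneg _
      have hs2 : s ^ 2 = t ^ 2 * q + σ ^ 2 := Real.sq_sqrt (by positivity)
      have hsqσ : Real.sqrt (0 + σ ^ 2) = σ := by
        rw [zero_add, Real.sqrt_sq hσ.le]
      rw [RL, RL, hqf, hqf0, hnorm, hsqσ, ← hs, ← hn, ← hk]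
      set u : ℝ := t ^ 2 * q / (2 * σ) with hu
      have hupos : 0 ≤ u := by positivity
      have hu2 : 2 * σ * u = t ^ 2 * q := by
        rw [hu]; field_simp
      clear_value n k q C t s u
      have h1 : 2 * σ * s ≤ 2 * σ ^ 2 + t ^ 2 * q := by linarith [sq_nonneg (s - σ), hs2]
      have hsle : s ≤ σ + u :=
        le_of_mul_le_mul_left (by linarith [h1, hu2] : 2 * σ * s ≤ 2 * σ * (σ + u))
          (by positivity : (0:ℝ) < 2 * σ)
      have hA : (1 - t) * s ≤ σ + u - t * σ := by
        have m1 : 0 ≤ (1 - t) * (σ + u - s) :=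
          mul_nonneg (by linarith) (by linarith)
        have m2 : 0 ≤ t * u := mul_nonneg htpos.le hupos
        nlinarith [m1, m2]
      have hstep : 2 * ε * k * n * ((1 - t) * s) ≤ 2 * ε * k * n * (σ + u - t * σ) :=
        mul_le_mul_of_nonneg_left hA (by positivity)
      have F2 := mul_le_mul_of_nonneg_left htC (by positivity : (0:ℝ) ≤ 2 * t)
      have hu3 : 2 * ε * k * n * (2 * σ * u) = 2 * ε * k * n * (t ^ 2 * q) := by rw [hu2]
      have P : 0 < t * σ * (ε ^ 2 * n ^ 2 + ε * k * n * σ) := by positivity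
      have hX : 2 * σ * (t ^ 2 * q - 2 * ε ^ 2 * n ^ 2 * t + ε ^ 2 * n ^ 2 * t ^ 2
          + 2 * ε * k * n * u - 2 * ε * k * n * σ * t) < 0 := by
        rw [hC] at F2
        linarith [F2, hu3, P]
      have hexpr : t ^ 2 * q - 2 * ε ^ 2 * n ^ 2 * t + ε ^ 2 * n ^ 2 * t ^ 2
          + 2 * ε * k * n * u - 2 * ε * k * n * σ * t < 0 := by
        have h2σ : (0:ℝ) < 2 * σ := by positivity
        exact (mul_lt_mul_iff_right₀ h2σ).mp (by simpa using hX)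
      linarith [hstep, hexpr]
    have h := hmin ((1 - t) • θ0)
    rw [heq] at h
    linarith
  refine ⟨hne, ?_, ?_, ?_⟩
  · simp [RL]
  · simp [RL, sub_self, quadForm, Real.sqrt_sq hσ.le]
  · have h1 : RL S θ0 σ 0 θ0 = σ ^ 2 := by
      simp [RL, sub_self, quadForm, Real.sqrt_sq hσ.le]
    have h2 : RL S θ0 σ 0 θs = quadForm S (θs - θ0) + σ ^ 2 := by simp [RL]
    have h3 : 0 < quadForm S (θs - θ0) := quadForm_pos hS (sub_ne_zero.mpr hne)
    rw [h1, h2]; linarith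

end
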